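/- arXiv:2112.14014 — 5 statements merged into one kernel-verified Lean document; each statement's English description precedes it below -/
import Mathlib

section
/- (Theorem 2, scaling invariance) Let A be a p×p complex matrix, b ∈ ℂ^p, h, h' ∈ ℝ nonzero, and λ, λ' ∈ ℂ nonzero with hλ = h'λ'. If α ∈ ℂ satisfies the learnability equation for step size h and parameter λ, namely det(I − hαA) ≠ 0 and 1 + hα·bᵀ(I − hαA)⁻¹𝟙 = e^{hλ}, then α' := (λ'/λ)·α satisfies the learnability equation for step size h' and parameter λ', and moreover α'/λ' = α/λ. Consequently the learnability coefficient |α/λ − 1| of the corresponding solution depends only on z = hλ. -/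
open Matrix

/-- Theorem 2, scaling invariance: if `α` solves the learnability equation
for step size `h` and parameter `λ`, and `h λ = h' λ'`, then `α' = (λ'/λ) α` solves the
learnability equation for step size `h'` and parameter `λ'`, and `α'/λ' = α/λ`; hence the
learnability coefficient `|α/λ − 1|` depends only on `z = hλ`. -/
theorem rk_learnability_scaling_invariance
    (p : ℕ) (A : Matrix (Fin p) (Fin p) ℂ) (b : Fin p → ℂ)
    (h h' : ℝ) (hh : h ≠ 0) (hh' : h' ≠ 0)
    (lam lam' : ℂ) (hlam : lam ≠ 0) (hlam' : lam' ≠ 0)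
    (hz : (h : ℂ) * lam = (h' : ℂ) * lam')
    (α : ℂ)
    (hdet : IsUnit ((1 : Matrix (Fin p) (Fin p) ℂ) - ((h : ℂ) * α) • A).det)
    (heq : 1 + (h : ℂ) * α *
        (b ⬝ᵥ ((1 : Matrix (Fin p) (Fin p) ℂ) - ((h : ℂ) * α) • A)⁻¹.mulVec
          (fun _ : Fin p => (1 : ℂ)))
      = Complex.exp ((h : ℂ) * lam)) :
    IsUnit ((1 : Matrix (Fin p) (Fin p) ℂ)
        - ((h' : ℂ) * (lam' / lam * α)) • A).det
    ∧ 1 + (h' : ℂ) * (lam' / lam * α) *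
        (b ⬝ᵥ ((1 : Matrix (Fin p) (Fin p) ℂ)
            - ((h' : ℂ) * (lam' / lam * α)) • A)⁻¹.mulVec
          (fun _ : Fin p => (1 : ℂ)))
      = Complex.exp ((h' : ℂ) * lam')
    ∧ (lam' / lam * α) / lam' = α / lam
    ∧ ‖(lam' / lam * α) / lam' - 1‖ = ‖α / lam - 1‖ := by
  have key : (h' : ℂ) * (lam' / lam * α) = (h : ℂ) * α := by
    field_simp
    linear_combination α * hz.symm
  have key2 : (lam' / lam * α) / lam' = α / lam := by
    field_simp
  rw [key, ← hz, key2]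
  exact ⟨hdet, heq, rfl, rfl⟩
end

section
/- (Example: explicit midpoint, solution set) Let h ∈ ℝ, h ≠ 0, λ ∈ ℂ, and let w ∈ ℂ be any complex number with w² = 2e^{hλ} − 1. Then α ∈ ℂ satisfies 1 + hα + h²α²/2 = e^{hλ} if and only if α = (−1 + w)/h or α = (−1 − w)/h. In particular the learnability equation of the explicit midpoint method admits exactly these two solutions, so the learned linear model is not uniquely determined. -/
/-- example: explicit midpoint, solution set: for `h ≠ 0`, `λ ∈ ℂ` and any
`w ∈ ℂ` with `w² = 2 e^{hλ} − 1`, the learnability equation of the explicit midpoint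
method `1 + hα + h²α²/2 = e^{hλ}` holds iff `α = (−1 + w)/h` or `α = (−1 − w)/h`;
so the learned linear model is not uniquely determined. -/
theorem explicit_midpoint_solution_set
    (h : ℝ) (hh : h ≠ 0) (lam w : ℂ)
    (hw : w ^ 2 = 2 * Complex.exp ((h : ℂ) * lam) - 1) :
    ∀ α : ℂ,
      1 + (h : ℂ) * α + (h : ℂ) ^ 2 * α ^ 2 / 2 = Complex.exp ((h : ℂ) * lam)
        ↔ α = (-1 + w) / (h : ℂ) ∨ α = (-1 - w) / (h : ℂ) := by
  intro α
  have hc : (h : ℂ) ≠ 0 := Complex.ofReal_ne_zero.mpr hh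
  constructor
  · intro heq
    have hfac : ((h : ℂ) * α + 1 - w) * ((h : ℂ) * α + 1 + w) = 0 := by
      linear_combination 2 * heq - hw
    rcases mul_eq_zero.1 hfac with h1 | h2
    · left
      field_simp
      linear_combination h1
    · right
      field_simp
      linear_combination h2
  · rintro (rfl | rfl)
    · field_simp
      linear_combination hw
    · field_simp
      linear_combination hw
end

section
/- (Example: explicit midpoint, the branch α₊ is a second-order approximation) Fix λ ∈ ℂ and for real h near 0 define α₊(h) = (−1 + (2e^{hλ} − 1)^{1/2})/h, where (·)^{1/2} denotes the principal complex square root. Then α₊(h) − λ − h²λ³/6 = O(h³) as h → 0; in particular α₊(h) − λ = O(h²), so α₊ is a second-order accurate approximation of λ. -/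
open Filter Topology Asymptotics

private lemma sq_cpow_half (z : ℂ) : (z ^ ((1:ℂ)/2)) ^ 2 = z := by
  by_cases hz : z = 0
  · simp [hz, Complex.zero_cpow (by norm_num : ((1:ℂ)/2) ≠ 0)]
  · rw [sq, ← Complex.cpow_add _ _ hz]
    norm_num

private noncomputable def sFun (lam : ℂ) (h : ℝ) : ℂ :=
  (2 * Complex.exp ((h : ℂ) * lam) - 1) ^ ((1 : ℂ) / 2)

private noncomputable def aFun (lam : ℂ) (h : ℝ) : ℂ :=
  (-1 + sFun lam h) / (h : ℂ)

private noncomputable def EFun (lam : ℂ) (h : ℝ) : ℂ :=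
  Complex.exp ((h : ℂ) * lam)
    - (1 + (h : ℂ) * lam + ((h : ℂ) * lam) ^ 2 / 2 + ((h : ℂ) * lam) ^ 3 / 6)

/-- example: explicit midpoint, the branch `α₊` is a second-order
approximation: for fixed `λ ∈ ℂ`, with
`α₊(h) = (−1 + (2 e^{hλ} − 1)^{1/2})/h` (principal square root), we have
`α₊(h) − λ − h²λ³/6 = O(h³)` and `α₊(h) − λ = O(h²)` as `h → 0` through nonzero reals. -/
theorem explicit_midpoint_alpha_plus_second_order (lam : ℂ) :
    (fun h : ℝ =>
        (-1 + (2 * Complex.exp ((h : ℂ) * lam) - 1) ^ ((1 : ℂ) / 2)) / (h : ℂ)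
          - lam - (h : ℂ) ^ 2 * lam ^ 3 / 6)
      =O[𝓝[≠] (0 : ℝ)] (fun h : ℝ => h ^ 3)
    ∧ (fun h : ℝ =>
        (-1 + (2 * Complex.exp ((h : ℂ) * lam) - 1) ^ ((1 : ℂ) / 2)) / (h : ℂ)
          - lam)
      =O[𝓝[≠] (0 : ℝ)] (fun h : ℝ => h ^ 2) := by
  set l : Filter ℝ := 𝓝[≠] (0 : ℝ) with hl
  have hsq : ∀ h : ℝ, sFun lam h ^ 2 = 2 * Complex.exp ((h : ℂ) * lam) - 1 :=
    fun h => sq_cpow_half _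
  have hne : ∀ᶠ h : ℝ in l, (h : ℂ) ≠ 0 := by
    filter_upwards [self_mem_nhdsWithin] with h hh
    simpa using (Set.mem_compl_singleton_iff.mp hh)
  -- the inner function tends to 1
  have hw : Tendsto (fun h : ℝ => 2 * Complex.exp ((h : ℂ) * lam) - 1) l (𝓝 1) := by
    have hc : Continuous fun h : ℝ => 2 * Complex.exp ((h : ℂ) * lam) - 1 := by
      continuity
    have := (hc.tendsto 0).mono_left (nhdsWithin_le_nhds (s := {(0:ℝ)}ᶜ))
    rw [hl]
    norm_num at this
    exact this
  -- s tends to 1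
  have hs1 : Tendsto (sFun lam) l (𝓝 1) := by
    have hc : ContinuousAt (fun z : ℂ => z ^ ((1:ℂ)/2)) 1 :=
      continuousAt_cpow_const (by simp [Complex.slitPlane])
    have h2 := hc.tendsto.comp hw
    rw [show (1:ℂ) ^ ((1:ℂ)/2) = 1 from Complex.one_cpow _] at h2
    exact h2
  -- difference quotient of exp tends to lam
  have hd : Tendsto (fun h : ℝ => (Complex.exp ((h : ℂ) * lam) - 1) / (h : ℂ)) l (𝓝 lam) := by
    have hder : HasDerivAt (fun h : ℝ => Complex.exp ((h : ℂ) * lam)) lam 0 := by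
      have h1 : HasDerivAt (fun h : ℝ => (h : ℂ) * lam) lam 0 := by
        simpa using (Complex.ofRealCLM.hasDerivAt (x := (0:ℝ))).mul_const lam
      simpa using h1.cexp
    have := hasDerivAt_iff_tendsto_slope.mp hder
    rw [hl]
    refine this.congr fun h => ?_
    simp [slope_def_module, Complex.real_smul, div_eq_inv_mul]
  have hsne : ∀ᶠ h : ℝ in l, sFun lam h + 1 ≠ 0 := by
    have ht : Tendsto (fun h => sFun lam h + 1) l (𝓝 (2:ℂ)) := by
      have := hs1.add (tendsto_const_nhds (x := (1:ℂ)))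
      norm_num at this
      exact this
    exact ht.eventually_ne (by norm_num)
  -- a tends to lam
  have ha : Tendsto (aFun lam) l (𝓝 lam) := by
    have key : (fun h : ℝ => 2 * ((Complex.exp ((h : ℂ) * lam) - 1) / (h : ℂ))
        / (sFun lam h + 1)) =ᶠ[l] aFun lam := by
      filter_upwards [hne, hsne] with h h0 hs0
      have hq := hsq h
      rw [aFun]
      field_simp
      linear_combination (-1:ℂ) * hq
    have ht2 : Tendsto (fun h => sFun lam h + 1) l (𝓝 (2:ℂ)) := by
      have := hs1.add (tendsto_const_nhds (x := (1:ℂ)))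
      norm_num at this
      exact this
    have := ((hd.const_mul 2).div ht2 (by norm_num))
    norm_num at this
    exact this.congr' key
  -- E is O(h^4)
  have hE : (EFun lam) =O[l] (fun h : ℝ => h ^ 4) := by
    rw [isBigO_iff]
    refine ⟨‖lam‖ ^ 4 * (5 * ((24:ℝ) * 4)⁻¹), ?_⟩
    have hev : ∀ᶠ h : ℝ in l, ‖(h : ℂ) * lam‖ ≤ 1 := by
      have hc : Continuous fun h : ℝ => ‖(h : ℂ) * lam‖ := by continuity
      have := (hc.tendsto 0).mono_left (nhdsWithin_le_nhds (s := {(0:ℝ)}ᶜ))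
      have h00 : ‖((0:ℝ):ℂ) * lam‖ = 0 := by simp
      rw [h00] at this
      exact this.eventually (eventually_le_nhds (by norm_num))
    filter_upwards [hev] with h hh
    have hb := Complex.exp_bound hh (by norm_num : 0 < 4)
    have hsum : ∑ m ∈ Finset.range 4, ((h:ℂ)*lam) ^ m / m.factorial
        = 1 + (h:ℂ)*lam + ((h:ℂ)*lam)^2/2 + ((h:ℂ)*lam)^3/6 := by
      norm_num [Finset.sum_range_succ, Nat.factorial]
    rw [hsum] at hb
    have : ‖EFun lam h‖ ≤ (|h| * ‖lam‖) ^ 4 * ((5:ℝ) * ((24:ℝ) * 4)⁻¹) := by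
      simpa [EFun, norm_mul, Complex.norm_real, Nat.factorial] using hb
    refine this.trans (le_of_eq ?_)
    rw [Real.norm_eq_abs, abs_pow]
    ring
  -- E/h is O(h^3)
  have hEdiv : (fun h : ℝ => EFun lam h / (h : ℂ)) =O[l] (fun h : ℝ => h ^ 3) := by
    rcases isBigO_iff.mp hE with ⟨c, hc⟩
    rw [isBigO_iff]
    refine ⟨c, ?_⟩
    filter_upwards [hc, hne] with h hbd h0
    have habs : (0:ℝ) < |h| := by
      simpa using abs_pos.mpr (by exact_mod_cast fun hh => h0 (by exact_mod_cast hh) : h ≠ 0)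
    rw [norm_div, Complex.norm_real, Real.norm_eq_abs, div_le_iff₀ habs]
    calc ‖EFun lam h‖ ≤ c * ‖h ^ 4‖ := hbd
      _ = c * |h ^ 3| * |h| := by
          rw [Real.norm_eq_abs, abs_pow, abs_pow]; ring
      _ = c * ‖h ^ 3‖ * |h| := by rw [Real.norm_eq_abs]
  -- the learnability equation
  have heq : ∀ᶠ h : ℝ in l, 1 + (h:ℂ) * aFun lam h + (h:ℂ)^2 * (aFun lam h)^2 / 2
      = Complex.exp ((h:ℂ) * lam) := by
    filter_upwards [hne] with h h0
    have hq := hsq h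
    rw [aFun]
    field_simp
    linear_combination hq
  -- key identity
  have hid : ∀ᶠ h : ℝ in l, (aFun lam h - lam) * (1 + (h:ℂ) * (aFun lam h + lam) / 2)
      = (h:ℂ)^2 * lam^3 / 6 + EFun lam h / (h:ℂ) := by
    filter_upwards [hne, heq] with h h0 he
    rw [EFun]
    field_simp
    linear_combination (12:ℂ) * he + 12 * congrArg Complex.exp (mul_comm (h:ℂ) lam)
  -- the factor tends to 1 and is eventually bounded below
  have hT : Tendsto (fun h : ℝ => 1 + (h:ℂ) * (aFun lam h + lam) / 2) l (𝓝 1) := by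
    have hc : Tendsto (fun h : ℝ => (h:ℂ)) l (𝓝 0) :=
      (Complex.continuous_ofReal.tendsto 0).mono_left (nhdsWithin_le_nhds (s := {(0:ℝ)}ᶜ))
    have h2 := ((hc.mul (ha.add (tendsto_const_nhds (x := lam)))).div_const 2).const_add 1
    rw [show (1:ℂ) + 0 * (lam + lam) / 2 = 1 by ring] at h2
    exact h2
  have hTlb : ∀ᶠ h : ℝ in l, (1:ℝ)/2 ≤ ‖1 + (h:ℂ) * (aFun lam h + lam) / 2‖ := by
    have hn : Tendsto (fun h : ℝ => ‖1 + (h:ℂ) * (aFun lam h + lam) / 2‖) l (𝓝 1) := by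
      simpa using hT.norm
    exact hn.eventually (eventually_ge_nhds (by norm_num))
  -- RHS of the identity is O(h^2)
  have h3le2 : (fun h : ℝ => h ^ 3) =O[l] (fun h : ℝ => h ^ 2) :=
    ((isLittleO_pow_pow (by norm_num : 2 < 3)).isBigO).mono (nhdsWithin_le_nhds (s := {(0:ℝ)}ᶜ))
  have hC : (fun h : ℝ => (h:ℂ)^2 * lam^3 / 6) =O[l] (fun h : ℝ => h ^ 2) := by
    rw [isBigO_iff]
    refine ⟨‖lam^3/6‖, Eventually.of_forall fun h => le_of_eq ?_⟩
    rw [mul_div_assoc, norm_mul, norm_pow, Complex.norm_real, Real.norm_eq_abs,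
      Real.norm_eq_abs, abs_pow]
    ring
  have hRHS : (fun h : ℝ => (h:ℂ)^2 * lam^3 / 6 + EFun lam h / (h:ℂ)) =O[l]
      (fun h : ℝ => h ^ 2) := hC.add (hEdiv.trans h3le2)
  -- a - lam is O(h^2)
  have hD : (fun h : ℝ => aFun lam h - lam) =O[l] (fun h : ℝ => h ^ 2) := by
    refine IsBigO.trans ?_ hRHS
    rw [isBigO_iff]
    refine ⟨2, ?_⟩
    filter_upwards [hid, hTlb] with h hid1 hlb
    calc ‖aFun lam h - lam‖ = 2 * (‖aFun lam h - lam‖ * (1/2)) := by ring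
      _ ≤ 2 * (‖aFun lam h - lam‖ * ‖1 + (h:ℂ) * (aFun lam h + lam) / 2‖) := by
          have := mul_le_mul_of_nonneg_left hlb (norm_nonneg (aFun lam h - lam))
          linarith
      _ = 2 * ‖(aFun lam h - lam) * (1 + (h:ℂ) * (aFun lam h + lam) / 2)‖ := by
          rw [norm_mul]
      _ = 2 * ‖(h:ℂ)^2 * lam^3 / 6 + EFun lam h / (h:ℂ)‖ := by rw [hid1]
  -- the product term is O(h^3)
  have hco : (fun h : ℝ => (h:ℂ)) =O[l] (fun h : ℝ => h) := by
    rw [isBigO_iff]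
    exact ⟨1, Eventually.of_forall fun h => by simp [Complex.norm_real]⟩
  have hb1 : (fun h : ℝ => (aFun lam h + lam) / 2) =O[l] (fun _ : ℝ => (1:ℝ)) :=
    ((ha.add (tendsto_const_nhds (x := lam))).div_const 2).isBigO_one ℝ
  have hX : (fun h : ℝ => (h:ℂ) * (aFun lam h + lam) / 2) =O[l] (fun h : ℝ => h) :=
    (hco.mul hb1).congr (fun h => (mul_div_assoc _ _ _).symm) (fun h => mul_one h)
  have hprod : (fun h : ℝ => (aFun lam h - lam) * ((h:ℂ) * (aFun lam h + lam) / 2))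
      =O[l] (fun h : ℝ => h ^ 3) :=
    (hD.mul hX).congr (fun _ => rfl) (fun h => by ring)
  constructor
  · refine ((hEdiv.sub hprod).congr' ?_ EventuallyEq.rfl)
    filter_upwards [hid] with h hid1
    have ha2 : aFun lam h
        = (-1 + (2 * Complex.exp ((h:ℂ) * lam) - 1) ^ ((1:ℂ)/2)) / (h:ℂ) := rfl
    linear_combination -hid1 + ha2
  · exact hD
end

section
/- (Example: explicit midpoint, the branch α₋ is not an approximation of λ) Fix λ ∈ ℂ and for real h near 0, h ≠ 0, define α₋(h) = (−1 − (2e^{hλ} − 1)^{1/2})/h, where (·)^{1/2} denotes the principal complex square root. Then α₋(h) + 2/h converges to −λ as h → 0 (h ≠ 0); in particular h·α₋(h) → −2, so α₋(h) does not converge to λ and the corresponding learned model is completely different from the true dynamics. -/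
open Filter Topology

/-- example: explicit midpoint, the branch `α₋` is not an approximation of
`λ`: for fixed `λ ∈ ℂ`, with `α₋(h) = (−1 − (2 e^{hλ} − 1)^{1/2})/h` (principal square
root), as `h → 0` through nonzero reals we have `α₋(h) + 2/h → −λ`, in particular
`h·α₋(h) → −2` and `α₋(h)` does not converge to `λ`. -/
theorem explicit_midpoint_alpha_minus_not_approximation (lam : ℂ) :
    Tendsto
      (fun h : ℝ =>
        (-1 - (2 * Complex.exp ((h : ℂ) * lam) - 1) ^ ((1 : ℂ) / 2)) / (h : ℂ)
          + 2 / (h : ℂ))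
      (𝓝[≠] (0 : ℝ)) (𝓝 (-lam))
    ∧ Tendsto
      (fun h : ℝ =>
        (h : ℂ) *
          ((-1 - (2 * Complex.exp ((h : ℂ) * lam) - 1) ^ ((1 : ℂ) / 2)) / (h : ℂ)))
      (𝓝[≠] (0 : ℝ)) (𝓝 (-2))
    ∧ ¬ Tendsto
      (fun h : ℝ =>
        (-1 - (2 * Complex.exp ((h : ℂ) * lam) - 1) ^ ((1 : ℂ) / 2)) / (h : ℂ))
      (𝓝[≠] (0 : ℝ)) (𝓝 lam) := by
  set g : ℝ → ℂ := fun h => (2 * Complex.exp ((h : ℂ) * lam) - 1) ^ ((1 : ℂ) / 2) with hg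
  -- derivative of the complex version at 0
  have hinner : HasDerivAt (fun z : ℂ => 2 * Complex.exp (z * lam) - 1)
      (2 * lam) (0 : ℂ) := by
    have h1 : HasDerivAt (fun z : ℂ => z * lam) lam (0 : ℂ) := by
      simpa using (hasDerivAt_id (0 : ℂ)).mul_const lam
    have h2 := h1.cexp
    have h3 := (h2.const_mul (2 : ℂ)).sub_const 1
    simpa using h3
  have hslit : (fun z : ℂ => 2 * Complex.exp (z * lam) - 1) 0 ∈ Complex.slitPlane := by
    simp [Complex.slitPlane]
  have hC : HasDerivAt (fun z : ℂ => (2 * Complex.exp (z * lam) - 1) ^ ((1 : ℂ) / 2))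
      lam (0 : ℂ) := by
    have key : (1 : ℂ) / 2 * (2 * Complex.exp ((0 : ℂ) * lam) - 1) ^ ((1 : ℂ) / 2 - 1)
        * (2 * lam) = lam := by
      rw [zero_mul, Complex.exp_zero, mul_one]
      norm_num
      ring
    have h := hinner.cpow_const (c := (1 : ℂ) / 2) hslit
    rw [key] at h
    exact h
  have hR : HasDerivAt g lam (0 : ℝ) := by
    have := hC.comp_ofReal (z := (0 : ℝ))
    simpa [hg] using this
  have hg0 : g 0 = 1 := by
    simp only [hg, Complex.ofReal_zero, zero_mul, Complex.exp_zero, mul_one]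
    rw [show ((2 : ℂ) - 1) = 1 by norm_num, Complex.one_cpow]
  -- first part
  have h1 : Tendsto
      (fun h : ℝ => (-1 - g h) / (h : ℂ) + 2 / (h : ℂ)) (𝓝[≠] (0 : ℝ)) (𝓝 (-lam)) := by
    have hs : HasDerivWithinAt g lam ({(0:ℝ)}ᶜ) 0 := hR.hasDerivWithinAt
    rw [hasDerivWithinAt_iff_tendsto_slope' (by simp)] at hs
    have := hs.neg
    rw [show -lam = -lam from rfl]
    refine Tendsto.congr' ?_ this
    filter_upwards [self_mem_nhdsWithin] with h hh
    have hh0 : (h : ℂ) ≠ 0 := by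
      exact Complex.ofReal_ne_zero.mpr hh
    simp only [slope_def_module, hg0, sub_zero, Complex.real_smul, Complex.ofReal_inv]
    field_simp
    ring
  -- continuity of g at 0, hence second part
  have hcont : Tendsto g (𝓝[≠] (0 : ℝ)) (𝓝 1) := by
    have := hR.continuousAt.continuousWithinAt (s := ({(0:ℝ)}ᶜ : Set ℝ))
    simpa [hg0] using this.tendsto
  have h2 : Tendsto (fun h : ℝ => (h : ℂ) * ((-1 - g h) / (h : ℂ)))
      (𝓝[≠] (0 : ℝ)) (𝓝 (-2)) := by
    have hlim : Tendsto (fun h : ℝ => -1 - g h) (𝓝[≠] (0 : ℝ)) (𝓝 (-2)) := by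
      have := (tendsto_const_nhds (x := (-1 : ℂ))).sub hcont
      simpa [show (-1 - 1 : ℂ) = -2 by norm_num] using this
    refine Tendsto.congr' ?_ hlim
    filter_upwards [self_mem_nhdsWithin] with h hh
    have hh0 : (h : ℂ) ≠ 0 := by
      exact Complex.ofReal_ne_zero.mpr hh
    field_simp
  refine ⟨h1, h2, ?_⟩
  -- third part
  intro hbad
  have hh0 : Tendsto (fun h : ℝ => (h : ℂ)) (𝓝[≠] (0 : ℝ)) (𝓝 0) := by
    have : Tendsto (fun h : ℝ => (h : ℂ)) (𝓝 (0 : ℝ)) (𝓝 0) := by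
      simpa using (Complex.continuous_ofReal.tendsto 0)
    exact this.mono_left nhdsWithin_le_nhds
  have := hh0.mul hbad
  rw [zero_mul] at this
  have huniq : (-2 : ℂ) = 0 := tendsto_nhds_unique h2 this
  norm_num at huniq
end

section
/- (Existence of a solution in Theorem 1 for consistent explicit methods) Let p ≥ 1, let A be a p×p complex matrix with A^p = 0, and let b ∈ ℂ^p with bᵀ𝟙 = Σᵢ bᵢ ≠ 0. Then for every nonzero h ∈ ℝ and every λ ∈ ℂ there exists α ∈ ℂ such that I − hαA is invertible and 1 + hα·bᵀ(I − hαA)⁻¹𝟙 = e^{hλ}; that is, the learnability equation of the method always has a solution. -/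
open Matrix Polynomial

/-- existence of a solution in Theorem 1 for consistent explicit methods:
if `A^p = 0` and `bᵀ𝟙 = ∑ᵢ bᵢ ≠ 0`, then for every nonzero `h ∈ ℝ` and every `λ ∈ ℂ`
there exists `α ∈ ℂ` with `I − h α A` invertible and
`1 + h α bᵀ (I − h α A)⁻¹ 𝟙 = e^{hλ}`; i.e. the learnability equation always has a
solution. -/
theorem rk_learnability_equation_has_solution
    (p : ℕ) (hp : 1 ≤ p) (A : Matrix (Fin p) (Fin p) ℂ) (hA : A ^ p = 0)
    (b : Fin p → ℂ) (hb : ∑ i, b i ≠ 0) :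
    ∀ (h : ℝ), h ≠ 0 → ∀ lam : ℂ,
      ∃ α : ℂ,
        IsUnit ((1 : Matrix (Fin p) (Fin p) ℂ) - ((h : ℂ) * α) • A).det
        ∧ 1 + (h : ℂ) * α *
            (b ⬝ᵥ ((1 : Matrix (Fin p) (Fin p) ℂ) - ((h : ℂ) * α) • A)⁻¹.mulVec
              (fun _ : Fin p => (1 : ℂ)))
          = Complex.exp ((h : ℂ) * lam) := by
  intro h hh lam
  set c : ℕ → ℂ := fun k => b ⬝ᵥ (A ^ k).mulVec (fun _ => (1 : ℂ)) with hc
  -- the polynomial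
  set P : Polynomial ℂ :=
    C 1 + ∑ k ∈ Finset.range p, C ((h : ℂ) ^ (k + 1) * c k) * X ^ (k + 1) with hP
  set Q : Polynomial ℂ := P - C (Complex.exp ((h : ℂ) * lam)) with hQ
  have hcoeff1 : Q.coeff 1 = (h : ℂ) * c 0 := by
    simp only [hQ, hP, coeff_sub, coeff_add, coeff_C, Polynomial.finset_sum_coeff,
      coeff_C_mul, coeff_X_pow]
    rw [Finset.sum_eq_single 0]
    · simp
    · intro k hk hk0
      simp only [mul_ite, mul_one, mul_zero, ite_eq_right_iff]
      intro hk'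
      omega
    · intro hk; simp at hk; omega
  have hc0 : c 0 = ∑ i, b i := by
    simp [hc, Matrix.one_mulVec, dotProduct]
  have hQ1 : Q.coeff 1 ≠ 0 := by
    rw [hcoeff1, hc0]
    exact mul_ne_zero (by exact_mod_cast hh) hb
  have hdeg : 0 < Q.degree := lt_of_lt_of_le (by norm_num)
    (le_degree_of_ne_zero hQ1)
  obtain ⟨α, hα⟩ := Complex.exists_root hdeg
  refine ⟨α, ?_, ?_⟩
  · -- nilpotency
    have hnil : IsNilpotent (((h : ℂ) * α) • A) := ⟨p, by
      rw [_root_.smul_pow, hA, smul_zero]⟩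
    have := hnil.isUnit_one_sub
    exact (Matrix.isUnit_iff_isUnit_det _).mp this
  · have hnil : IsNilpotent (((h : ℂ) * α) • A) := ⟨p, by
      rw [_root_.smul_pow, hA, smul_zero]⟩
    set N := ((h : ℂ) * α) • A with hN
    have hinv : ((1 : Matrix (Fin p) (Fin p) ℂ) - N)⁻¹
        = ∑ k ∈ Finset.range p, N ^ k := by
      apply Matrix.inv_eq_right_inv
      have : N ^ p = 0 := by rw [hN, _root_.smul_pow, hA, smul_zero]
      have hg := mul_geom_sum N p
      rw [← neg_sub N 1, neg_mul, hg, this]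
      simp
    have hroot : P.eval α = Complex.exp ((h : ℂ) * lam) := by
      have := hα
      simp only [hQ, IsRoot, eval_sub, eval_C, sub_eq_zero] at this
      exact this
    rw [hinv]
    have hexp : (b ⬝ᵥ (∑ k ∈ Finset.range p, N ^ k).mulVec (fun _ => (1:ℂ)))
        = ∑ k ∈ Finset.range p, ((h : ℂ) * α) ^ k * c k := by
      have hmv : (∑ k ∈ Finset.range p, N ^ k).mulVec (fun _ => (1:ℂ))
          = ∑ k ∈ Finset.range p, (N ^ k).mulVec (fun _ => (1:ℂ)) := by
        ext i
        simp only [Matrix.mulVec, dotProduct, Matrix.sum_apply, Finset.sum_apply,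
          Finset.sum_mul]
        rw [Finset.sum_comm]
      have hd : b ⬝ᵥ (∑ k ∈ Finset.range p, (N ^ k).mulVec (fun _ => (1:ℂ)))
          = ∑ k ∈ Finset.range p, b ⬝ᵥ (N ^ k).mulVec (fun _ => (1:ℂ)) := by
        simp only [dotProduct, Finset.sum_apply, Finset.mul_sum]
        rw [Finset.sum_comm]
      rw [hmv, hd]
      refine Finset.sum_congr rfl fun k _ => ?_
      rw [hN, _root_.smul_pow, Matrix.smul_mulVec, dotProduct_smul, smul_eq_mul]
    rw [hexp, ← hroot]
    simp only [hP, eval_add, eval_C, eval_finset_sum, eval_mul, eval_pow, eval_X]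
    rw [Finset.mul_sum]
    congr 1
    refine Finset.sum_congr rfl fun k _ => ?_
    rw [mul_pow]
    ring
end
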